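/- In the Face Lemma setup with the cyclic condition κ = α₁+α₂+β₁+β₂ = 0 (p₁, p₂ ∈ ℂⁿ linearly independent; q₁†, q₂† linearly independent row vectors; qᵢ†pⱼ ≠ 0 for i,j ∈ {1,2}; α₁, α₂, β₁, β₂ nonzero; α₁+α₂ ≠ 0, β₁+β₂ ≠ 0, α₁+β₁ ≠ 0, α₂+β₂ ≠ 0; and Q₁†·P₁, Q₁†·P₂, Q₂†·P₁, Q₂†·P₂ all nonzero), the cube closes with α₄ = −β₂, α₅ = −β₁, β₄ = −α₂, β₅ = −α₁; that is, all four outer node relations hold: (1) −β₂·P₁/(Q₁†P₁) − α₂·P₂/(Q₁†P₂) − (α₁+β₁)·p₁ = 0; (2) −β₁·P₁/(Q₂†P₁) − α₁·P₂/(Q₂†P₂) − (α₂+β₂)·p₂ = 0; (3) −β₂·Q₁†/(Q₁†P₁) − β₁·Q₂†/(Q₂†P₁) − (α₁+α₂)·q₁† = 0; (4) −α₂·Q₁†/(Q₁†P₂) − α₁·Q₂†/(Q₂†P₂) − (β₁+β₂)·q₂† = 0 (here Q₁†·p₁ = Q₂†·p₂ = q₁†·P₁ = q₂†·P₂ = 1).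 -/

import Mathlib

open Matrix

set_option maxHeartbeats 2000000 in
/-- Face Lemma with the cyclic condition `α₁+α₂+β₁+β₂ = 0`: the cube closes
with `α₄ = −β₂`, `α₅ = −β₁`, `β₄ = −α₂`, `β₅ = −α₁`, i.e. all four outer node
triple relations hold. -/
theorem face_lemma_cyclic_cube (n : ℕ) (p₁ p₂ q₁ q₂ : Fin n → ℂ)
    (hp : LinearIndependent ℂ ![p₁, p₂]) (hq : LinearIndependent ℂ ![q₁, q₂])
    (h11 : q₁ ⬝ᵥ p₁ ≠ 0) (h12 : q₁ ⬝ᵥ p₂ ≠ 0)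
    (h21 : q₂ ⬝ᵥ p₁ ≠ 0) (h22 : q₂ ⬝ᵥ p₂ ≠ 0)
    (α₁ α₂ β₁ β₂ : ℂ) (ha₁ : α₁ ≠ 0) (ha₂ : α₂ ≠ 0) (hb₁ : β₁ ≠ 0) (hb₂ : β₂ ≠ 0)
    (hαα : α₁ + α₂ ≠ 0) (hββ : β₁ + β₂ ≠ 0)
    (hαβ₁ : α₁ + β₁ ≠ 0) (hαβ₂ : α₂ + β₂ ≠ 0)
    (hκ : α₁ + α₂ + β₁ + β₂ = 0)
    (P₁ P₂ Q₁ Q₂ : Fin n → ℂ)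
    (hP₁ : P₁ = (α₁ + α₂)⁻¹ •
        (α₁ • ((q₁ ⬝ᵥ p₁)⁻¹ • p₁) + α₂ • ((q₁ ⬝ᵥ p₂)⁻¹ • p₂)))
    (hP₂ : P₂ = (β₁ + β₂)⁻¹ •
        (β₁ • ((q₂ ⬝ᵥ p₁)⁻¹ • p₁) + β₂ • ((q₂ ⬝ᵥ p₂)⁻¹ • p₂)))
    (hQ₁ : Q₁ = (α₁ + β₁)⁻¹ •
        (α₁ • ((q₁ ⬝ᵥ p₁)⁻¹ • q₁) + β₁ • ((q₂ ⬝ᵥ p₁)⁻¹ • q₂)))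
    (hQ₂ : Q₂ = (α₂ + β₂)⁻¹ •
        (α₂ • ((q₁ ⬝ᵥ p₂)⁻¹ • q₁) + β₂ • ((q₂ ⬝ᵥ p₂)⁻¹ • q₂)))
    (h1 : Q₁ ⬝ᵥ P₁ ≠ 0) (h2 : Q₁ ⬝ᵥ P₂ ≠ 0)
    (h3 : Q₂ ⬝ᵥ P₁ ≠ 0) (h4 : Q₂ ⬝ᵥ P₂ ≠ 0) :
    Q₁ ⬝ᵥ p₁ = 1 ∧ Q₂ ⬝ᵥ p₂ = 1 ∧ q₁ ⬝ᵥ P₁ = 1 ∧ q₂ ⬝ᵥ P₂ = 1 ∧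
    (-β₂) • ((Q₁ ⬝ᵥ P₁)⁻¹ • P₁) + (-α₂) • ((Q₁ ⬝ᵥ P₂)⁻¹ • P₂) -
      (α₁ + β₁) • p₁ = 0 ∧
    (-β₁) • ((Q₂ ⬝ᵥ P₁)⁻¹ • P₁) + (-α₁) • ((Q₂ ⬝ᵥ P₂)⁻¹ • P₂) -
      (α₂ + β₂) • p₂ = 0 ∧
    (-β₂) • ((Q₁ ⬝ᵥ P₁)⁻¹ • Q₁) + (-β₁) • ((Q₂ ⬝ᵥ P₁)⁻¹ • Q₂) -
      (α₁ + α₂) • q₁ = 0 ∧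
    (-α₂) • ((Q₁ ⬝ᵥ P₂)⁻¹ • Q₁) + (-α₁) • ((Q₂ ⬝ᵥ P₂)⁻¹ • Q₂) -
      (β₁ + β₂) • q₂ = 0 := by
  have hβ₂' : β₂ = -(α₁ + α₂ + β₁) := by linear_combination hκ
  subst hβ₂'
  set a := q₁ ⬝ᵥ p₁ with hav
  set b := q₁ ⬝ᵥ p₂ with hbv
  set c := q₂ ⬝ᵥ p₁ with hcv
  set d := q₂ ⬝ᵥ p₂ with hdv
  have hQ1p1 : Q₁ ⬝ᵥ p₁ = 1 := by
    rw [hQ₁]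
    simp only [smul_dotProduct, add_dotProduct, dotProduct_smul, smul_eq_mul, ← hav, ← hcv]
    field_simp
  have hQ2p2 : Q₂ ⬝ᵥ p₂ = 1 := by
    rw [hQ₂]
    simp only [smul_dotProduct, add_dotProduct, dotProduct_smul, smul_eq_mul, ← hbv, ← hdv]
    field_simp
  have hq1P1 : q₁ ⬝ᵥ P₁ = 1 := by
    rw [hP₁]
    simp only [dotProduct_smul, dotProduct_add, smul_eq_mul, ← hav, ← hbv]
    field_simp
  have hq2P2 : q₂ ⬝ᵥ P₂ = 1 := by
    rw [hP₂]
    simp only [dotProduct_smul, dotProduct_add, smul_eq_mul, ← hcv, ← hdv]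
    field_simp
  have hαα' : -α₂ + -α₁ ≠ 0 := fun h => hαα (by linear_combination -h)
  have hαβ' : -β₁ + -α₁ ≠ 0 := fun h => hαβ₁ (by linear_combination -h)
  have hαβ2n : α₂ + (-β₁ + (-α₂ + -α₁)) ≠ 0 := fun h => hαβ₁ (by linear_combination -h)
  have hββn : β₁ + (-β₁ + (-α₂ + -α₁)) ≠ 0 := fun h => hαα (by linear_combination -h)
  have hb₂n : -β₁ + (-α₂ + -α₁) ≠ 0 := fun h => hb₂ (by linear_combination h)
  set E := α₂ * β₁ * (a * d) + α₁ * (α₁ + α₂ + β₁) * (b * c) with hEv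
  have hX1 : a * b * c * ((α₁ + α₂) * (α₁ + β₁)) ≠ 0 :=
    mul_ne_zero (mul_ne_zero (mul_ne_zero h11 h12) h21) (mul_ne_zero hαα hαβ₁)
  have hX2 : a * c * d * ((α₁ + α₂) * (α₁ + β₁)) ≠ 0 :=
    mul_ne_zero (mul_ne_zero (mul_ne_zero h11 h21) h22) (mul_ne_zero hαα hαβ₁)
  have hX3 : a * b * d * ((α₁ + α₂) * (α₁ + β₁)) ≠ 0 :=
    mul_ne_zero (mul_ne_zero (mul_ne_zero h11 h12) h22) (mul_ne_zero hαα hαβ₁)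
  have hX4 : b * c * d * ((α₁ + α₂) * (α₁ + β₁)) ≠ 0 :=
    mul_ne_zero (mul_ne_zero (mul_ne_zero h12 h21) h22) (mul_ne_zero hαα hαβ₁)
  have hD11 : Q₁ ⬝ᵥ P₁ = E * (a * b * c * ((α₁ + α₂) * (α₁ + β₁)))⁻¹ := by
    rw [eq_mul_inv_iff_mul_eq₀ hX1, hQ₁, hP₁]
    simp only [smul_dotProduct, add_dotProduct, dotProduct_smul, dotProduct_add,
      smul_eq_mul, ← hav, ← hbv, ← hcv, ← hdv, hEv]
    field_simp [h11, h12, h21, h22, hαα, hαβ₁, hββ, hαβ₂, hb₂, hαα', hαβ', hαβ2n, hββn, hb₂n]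
    ring
  have hD12 : Q₁ ⬝ᵥ P₂ = E * (a * c * d * ((α₁ + α₂) * (α₁ + β₁)))⁻¹ := by
    rw [eq_mul_inv_iff_mul_eq₀ hX2, hQ₁, hP₂]
    simp only [smul_dotProduct, add_dotProduct, dotProduct_smul, dotProduct_add,
      smul_eq_mul, ← hav, ← hbv, ← hcv, ← hdv, hEv]
    field_simp [h11, h12, h21, h22, hαα, hαβ₁, hββ, hαβ₂, hb₂, hαα', hαβ', hαβ2n, hββn, hb₂n]
    ring
  have hD21 : Q₂ ⬝ᵥ P₁ = E * (a * b * d * ((α₁ + α₂) * (α₁ + β₁)))⁻¹ := by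
    rw [eq_mul_inv_iff_mul_eq₀ hX3, hQ₂, hP₁]
    simp only [smul_dotProduct, add_dotProduct, dotProduct_smul, dotProduct_add,
      smul_eq_mul, ← hav, ← hbv, ← hcv, ← hdv, hEv]
    field_simp [h11, h12, h21, h22, hαα, hαβ₁, hββ, hαβ₂, hb₂, hαα', hαβ', hαβ2n, hββn, hb₂n]
    ring
  have hD22 : Q₂ ⬝ᵥ P₂ = E * (b * c * d * ((α₁ + α₂) * (α₁ + β₁)))⁻¹ := by
    rw [eq_mul_inv_iff_mul_eq₀ hX4, hQ₂, hP₂]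
    simp only [smul_dotProduct, add_dotProduct, dotProduct_smul, dotProduct_add,
      smul_eq_mul, ← hav, ← hbv, ← hcv, ← hdv, hEv]
    field_simp [h11, h12, h21, h22, hαα, hαβ₁, hββ, hαβ₂, hb₂, hαα', hαβ', hαβ2n, hββn, hb₂n]
    ring
  have hE : E ≠ 0 := by
    intro h
    apply h1
    rw [hD11, h, zero_mul]
  set D₁ := Q₁ ⬝ᵥ P₁ with hD1v
  set D₂ := Q₁ ⬝ᵥ P₂ with hD2v
  set D₃ := Q₂ ⬝ᵥ P₁ with hD3v
  set D₄ := Q₂ ⬝ᵥ P₂ with hD4v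
  have k51 : (α₁ + α₂ + β₁) * D₁⁻¹ * ((α₁ + α₂)⁻¹ * (α₁ * a⁻¹)) +
      -α₂ * D₂⁻¹ * ((β₁ + -(α₁ + α₂ + β₁))⁻¹ * (β₁ * c⁻¹)) - (α₁ + β₁) = 0 := by
    rw [hD11, hD12]
    field_simp [hE, h11, h12, h21, h22, hαα, hαβ₁, hββ, hαβ₂, hb₂, hαα', hαβ', hαβ2n, hββn, hb₂n]
    first
      | (rw [div_eq_iff (by simp [mul_eq_zero, hE, h11, h12, h21, h22, hαα, hαβ₁, hββ, hαβ₂, hb₂, hαα', hαβ', hαβ2n, hββn, hb₂n])]; simp only [hEv]; ring)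
      | (simp only [hEv]; ring)
      | ring
  have k52 : (α₁ + α₂ + β₁) * D₁⁻¹ * ((α₁ + α₂)⁻¹ * (α₂ * b⁻¹)) +
      -α₂ * D₂⁻¹ * ((β₁ + -(α₁ + α₂ + β₁))⁻¹ * (-(α₁ + α₂ + β₁) * d⁻¹)) = 0 := by
    rw [hD11, hD12]
    field_simp [hE, h11, h12, h21, h22, hαα, hαβ₁, hββ, hαβ₂, hb₂, hαα', hαβ', hαβ2n, hββn, hb₂n]
    first
      | (rw [div_eq_iff (by simp [mul_eq_zero, hE, h11, h12, h21, h22, hαα, hαβ₁, hββ, hαβ₂, hb₂, hαα', hαβ', hαβ2n, hββn, hb₂n])]; simp only [hEv]; ring)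
      | (simp only [hEv]; ring)
      | ring
  have k61 : -β₁ * D₃⁻¹ * ((α₁ + α₂)⁻¹ * (α₁ * a⁻¹)) +
      -α₁ * D₄⁻¹ * ((β₁ + -(α₁ + α₂ + β₁))⁻¹ * (β₁ * c⁻¹)) = 0 := by
    rw [hD21, hD22]
    field_simp [hE, h11, h12, h21, h22, hαα, hαβ₁, hββ, hαβ₂, hb₂, hαα', hαβ', hαβ2n, hββn, hb₂n]
    first
      | (rw [div_eq_iff (by simp [mul_eq_zero, hE, h11, h12, h21, h22, hαα, hαβ₁, hββ, hαβ₂, hb₂, hαα', hαβ', hαβ2n, hββn, hb₂n])]; simp only [hEv]; ring)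
      | (simp only [hEv]; ring)
      | ring
  have k62 : -β₁ * D₃⁻¹ * ((α₁ + α₂)⁻¹ * (α₂ * b⁻¹)) +
      -α₁ * D₄⁻¹ * ((β₁ + -(α₁ + α₂ + β₁))⁻¹ * (-(α₁ + α₂ + β₁) * d⁻¹)) - (α₂ + -(α₁ + α₂ + β₁)) = 0 := by
    rw [hD21, hD22]
    field_simp [hE, h11, h12, h21, h22, hαα, hαβ₁, hββ, hαβ₂, hb₂, hαα', hαβ', hαβ2n, hββn, hb₂n]
    first
      | (rw [div_eq_iff (by simp [mul_eq_zero, hE, h11, h12, h21, h22, hαα, hαβ₁, hββ, hαβ₂, hb₂, hαα', hαβ', hαβ2n, hββn, hb₂n])]; simp only [hEv]; ring)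
      | (simp only [hEv]; ring)
      | ring
  have k71 : (α₁ + α₂ + β₁) * D₁⁻¹ * ((α₁ + β₁)⁻¹ * (α₁ * a⁻¹)) +
      -β₁ * D₃⁻¹ * ((α₂ + -(α₁ + α₂ + β₁))⁻¹ * (α₂ * b⁻¹)) - (α₁ + α₂) = 0 := by
    rw [hD11, hD21]
    field_simp [hE, h11, h12, h21, h22, hαα, hαβ₁, hββ, hαβ₂, hb₂, hαα', hαβ', hαβ2n, hββn, hb₂n]
    first
      | (rw [div_eq_iff (by simp [mul_eq_zero, hE, h11, h12, h21, h22, hαα, hαβ₁, hββ, hαβ₂, hb₂, hαα', hαβ', hαβ2n, hββn, hb₂n])]; simp only [hEv]; ring)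
      | (simp only [hEv]; ring)
      | ring
  have k72 : (α₁ + α₂ + β₁) * D₁⁻¹ * ((α₁ + β₁)⁻¹ * (β₁ * c⁻¹)) +
      -β₁ * D₃⁻¹ * ((α₂ + -(α₁ + α₂ + β₁))⁻¹ * (-(α₁ + α₂ + β₁) * d⁻¹)) = 0 := by
    rw [hD11, hD21]
    field_simp [hE, h11, h12, h21, h22, hαα, hαβ₁, hββ, hαβ₂, hb₂, hαα', hαβ', hαβ2n, hββn, hb₂n]
    first
      | (rw [div_eq_iff (by simp [mul_eq_zero, hE, h11, h12, h21, h22, hαα, hαβ₁, hββ, hαβ₂, hb₂, hαα', hαβ', hαβ2n, hββn, hb₂n])]; simp only [hEv]; ring)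
      | (simp only [hEv]; ring)
      | ring
  have k81 : -α₂ * D₂⁻¹ * ((α₁ + β₁)⁻¹ * (α₁ * a⁻¹)) +
      -α₁ * D₄⁻¹ * ((α₂ + -(α₁ + α₂ + β₁))⁻¹ * (α₂ * b⁻¹)) = 0 := by
    rw [hD12, hD22]
    field_simp [hE, h11, h12, h21, h22, hαα, hαβ₁, hββ, hαβ₂, hb₂, hαα', hαβ', hαβ2n, hββn, hb₂n]
    first
      | (rw [div_eq_iff (by simp [mul_eq_zero, hE, h11, h12, h21, h22, hαα, hαβ₁, hββ, hαβ₂, hb₂, hαα', hαβ', hαβ2n, hββn, hb₂n])]; simp only [hEv]; ring)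
      | (simp only [hEv]; ring)
      | ring
  have k82 : -α₂ * D₂⁻¹ * ((α₁ + β₁)⁻¹ * (β₁ * c⁻¹)) +
      -α₁ * D₄⁻¹ * ((α₂ + -(α₁ + α₂ + β₁))⁻¹ * (-(α₁ + α₂ + β₁) * d⁻¹)) - (β₁ + -(α₁ + α₂ + β₁)) = 0 := by
    rw [hD12, hD22]
    field_simp [hE, h11, h12, h21, h22, hαα, hαβ₁, hββ, hαβ₂, hb₂, hαα', hαβ', hαβ2n, hββn, hb₂n]
    first
      | (rw [div_eq_iff (by simp [mul_eq_zero, hE, h11, h12, h21, h22, hαα, hαβ₁, hββ, hαβ₂, hb₂, hαα', hαβ', hαβ2n, hββn, hb₂n])]; simp only [hEv]; ring)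
      | (simp only [hEv]; ring)
      | ring
  refine ⟨hQ1p1, hQ2p2, hq1P1, hq2P2, ?_, ?_, ?_, ?_⟩
  · rw [hP₁, hP₂]
    funext i
    simp only [Pi.add_apply, Pi.sub_apply, Pi.smul_apply, Pi.zero_apply, smul_eq_mul]
    linear_combination (p₁ i) * k51 + (p₂ i) * k52
  · rw [hP₁, hP₂]
    funext i
    simp only [Pi.add_apply, Pi.sub_apply, Pi.smul_apply, Pi.zero_apply, smul_eq_mul]
    linear_combination (p₁ i) * k61 + (p₂ i) * k62
  · rw [hQ₁, hQ₂]
    funext i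
    simp only [Pi.add_apply, Pi.sub_apply, Pi.smul_apply, Pi.zero_apply, smul_eq_mul]
    linear_combination (q₁ i) * k71 + (q₂ i) * k72
  · rw [hQ₁, hQ₂]
    funext i
    simp only [Pi.add_apply, Pi.sub_apply, Pi.smul_apply, Pi.zero_apply, smul_eq_mul]
    linear_combination (q₁ i) * k81 + (q₂ i) * k82
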